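/- Let δ1, δ3, δ4, τ, p be real numbers with 0 < δ1 < 1/25, 0 < δ3 < 1/100, δ4 > 0, τ > 0 and |p − 1| < δ3. Set k = 100δ4 + 13/τ and d = δ4/k, and define a = (p³/18)·((3 + d)^(3/2) + 9d), b = (1 − d)·(1 − δ1)² and c = 2δ1·(1 + d). If x : ℝ → ℝ satisfies x(0) = 0 and x'(t) = k·(−a + b·(p − x(t)) − c·x(t)) for all t ≥ 0, then x(τ/2) > 3/5. -/

import Mathlib

set_option maxHeartbeats 1000000


/-- Lemma 3.2 of the paper (x goes to 3/5). -/
theorem stmt_2 (δ1 δ3 δ4 τ p k d a b c : ℝ)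
    (hδ1 : 0 < δ1) (hδ1' : δ1 < 1/25)
    (hδ3 : 0 < δ3) (hδ3' : δ3 < 1/100)
    (hδ4 : 0 < δ4) (hτ : 0 < τ)
    (hp : |p - 1| < δ3)
    (hk : k = 100 * δ4 + 13 / τ)
    (hd : d = δ4 / k)
    (ha : a = (p^3 / 18) * ((3 + d) ^ ((3:ℝ)/2) + 9 * d))
    (hb : b = (1 - d) * (1 - δ1)^2)
    (hc : c = 2 * δ1 * (1 + d))
    (x : ℝ → ℝ)
    (hx0 : x 0 = 0)
    (hode : ∀ t : ℝ, 0 ≤ t →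
      HasDerivAt x (k * (-a + b * (p - x t) - c * x t)) t) :
    x (τ / 2) > 3/5 := by
  have hk0 : 0 < k := by
    rw [hk]; positivity
  have hd0 : 0 < d := by rw [hd]; positivity
  have hd1 : d ≤ 1/100 := by
    rw [hd, div_le_iff₀ hk0, hk]
    have : 0 < 13 / τ := by positivity
    nlinarith
  -- p bounds
  have hpb := abs_lt.mp hp
  have hp1 : (99:ℝ)/100 ≤ p := by nlinarith [hpb.1]
  have hp2 : p ≤ (101:ℝ)/100 := by nlinarith [hpb.2]
  -- bound on (3+d)^(3/2)
  have hS0 : (0:ℝ) ≤ (3 + d) ^ ((3:ℝ)/2) :=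
    Real.rpow_nonneg (by linarith) _
  have hSsq : ((3 + d) ^ ((3:ℝ)/2))^2 = (3+d)^3 := by
    rw [← Real.rpow_natCast ((3 + d) ^ ((3:ℝ)/2)) 2, ← Real.rpow_mul (by linarith)]
    norm_num
  have hS : (3 + d) ^ ((3:ℝ)/2) ≤ 5.23 := by
    have h2 : d^2 ≤ (1/100)*d := by nlinarith
    have h3 : d^3 ≤ (1/100)*d^2 := by nlinarith [sq_nonneg d]
    have hcube : (3+d)^3 ≤ 27.2709011 := by nlinarith [h2, h3, hd0, hd1]
    nlinarith [hSsq, hS0, hcube]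
  -- bounds on a, b, c
  have ha' : a ≤ p^3 * (5.32/18) := by
    have hsum : (3 + d) ^ ((3:ℝ)/2) + 9 * d ≤ 5.32 := by linarith
    calc a = (p^3/18) * ((3 + d) ^ ((3:ℝ)/2) + 9 * d) := ha
      _ ≤ (p^3/18) * 5.32 := by
          apply mul_le_mul_of_nonneg_left hsum (by positivity)
      _ = p^3 * (5.32/18) := by ring
  have hb1 : (912384:ℝ)/1000000 ≤ b := by rw [hb]; nlinarith
  have hb2 : b ≤ 1 := by rw [hb]; nlinarith
  have hc0 : 0 < c := by rw [hc]; nlinarith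
  have hc1 : c ≤ (808:ℝ)/10000 := by rw [hc]; nlinarith
  have hbc : 0 < b + c := by linarith
  -- equilibrium X
  set X : ℝ := (b*p - a)/(b+c) with hX
  have hXeq : b*p - a = X * (b+c) := by
    rw [hX]; field_simp
  have hXlb : (61:ℝ)/100 ≤ X := by
    rw [hX, le_div_iff₀ hbc]
    have hpg : (0:ℝ) ≤ p - 61/100 := by linarith
    have h2 : (912384:ℝ)/1000000 * (p - 61/100) ≤ b * (p - 61/100) :=
      mul_le_mul_of_nonneg_right hb1 hpg
    nlinarith [ha', h2, hc1, hp1, hp2,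
      mul_nonneg (sub_nonneg.mpr hp1) (sub_nonneg.mpr hp2),
      mul_nonneg (mul_nonneg (sub_nonneg.mpr hp1) (sub_nonneg.mpr hp2)) (sub_nonneg.mpr hp1),
      sq_nonneg (p-1)]
  -- the function g
  set K : ℝ := k * (b + c) with hK
  set g : ℝ → ℝ := fun t => (x t - X) * Real.exp (K * t) with hg
  have hgd : ∀ t : ℝ, 0 ≤ t → HasDerivAt g 0 t := by
    intro t ht
    have hxd := hode t ht
    have hE : HasDerivAt (fun s => Real.exp (K * s)) (Real.exp (K * t) * K) t := by
      simpa using ((hasDerivAt_id t).const_mul K).exp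
    have key := (hxd.sub_const X).mul hE
    have h0 : k * (-a + b * (p - x t) - c * x t) * Real.exp (K * t)
        + (x t - X) * (Real.exp (K * t) * K) = 0 := by
      rw [hK]
      linear_combination (k * Real.exp (k * (b+c) * t)) * hXeq
    rw [h0] at key
    exact key
  -- constancy argument on [0, τ/2]
  have hτ2 : (0:ℝ) ≤ τ/2 := by linarith
  have hcont : ContinuousOn g (Set.Icc 0 (τ/2)) := fun t ht =>
    ((hgd t ht.1).continuousAt).continuousWithinAt
  have hderiv : ∀ t ∈ Set.Ico (0:ℝ) (τ/2), HasDerivWithinAt g 0 (Set.Ici t) t :=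
    fun t ht => (hgd t ht.1).hasDerivWithinAt
  have hconst := constant_of_has_deriv_right_zero hcont hderiv (τ/2)
    (Set.right_mem_Icc.mpr hτ2)
  -- extract the formula
  have hg0 : g 0 = -X := by
    simp [hg, hx0]
  have hgτ : (x (τ/2) - X) * Real.exp (K * (τ/2)) = -X := by
    rw [← hg0]; exact hconst
  set E : ℝ := Real.exp (K * (τ/2)) with hE
  have hEpos : 0 < E := Real.exp_pos _
  -- lower bound on E
  have hkτ : 13 ≤ k * τ := by
    rw [hk]
    have : (13/τ) * τ = 13 := by field_simp
    nlinarith [mul_pos hδ4 hτ]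
  have hKτ : 5 ≤ K * (τ/2) := by
    rw [hK]
    have h1 : 13 * ((912384:ℝ)/1000000) ≤ (k * τ) * (b + c) :=
      mul_le_mul hkτ (by linarith) (by norm_num) (by linarith [mul_pos hk0 hτ])
    nlinarith [h1]
  have hE143 : (143:ℝ) ≤ E := by
    have h5 : Real.exp 5 ≤ E := by
      rw [hE]; exact Real.exp_le_exp.mpr hKτ
    have he1 : (2.7:ℝ) ≤ Real.exp 1 := by
      have := Real.exp_one_gt_d9; linarith
    have h5e : (2.7:ℝ)^5 ≤ Real.exp 5 := by
      have : Real.exp 5 = (Real.exp 1)^5 := by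
        rw [← Real.exp_nat_mul]; norm_num
      rw [this]
      exact pow_le_pow_left₀ (by norm_num) he1 5
    nlinarith
  -- conclude
  have hxτ : x (τ/2) * E = X * E - X := by linear_combination hgτ
  have hgoal : x (τ/2) * E > (3/5) * E := by
    nlinarith [hxτ, hXlb, hE143,
      mul_nonneg (sub_nonneg.mpr hXlb) (by linarith : (0:ℝ) ≤ E - 1)]
  exact lt_of_mul_lt_mul_right (by linarith [hgoal]) (le_of_lt hEpos)
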